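/- Let X satisfy E|X|^p < ∞ for some p > 0 and let α > 1. Then ∑_{k=1}^∞ (Log k)^{-α} · P(|X|^p > k / (Log k)^α) < ∞, where Log x := log(max{x, e}). -/

import Mathlib

open MeasureTheory Filter
noncomputable def Log (x : ℝ) : ℝ := Real.log (max x (Real.exp 1))

lemma one_le_Log (x : ℝ) : 1 ≤ Log x := by
  have h : Real.log (Real.exp 1) ≤ Real.log (max x (Real.exp 1)) :=
    Real.log_le_log (Real.exp_pos 1) (le_max_right x (Real.exp 1))
  simpa [Log] using h
lemma Log_of_ge {x : ℝ} (hx : Real.exp 1 ≤ x) : Log x = Real.log x := by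
  rw [Log, max_eq_left hx]

lemma exp_le_one_add_two_mul {x : ℝ} (h0 : 0 ≤ x) (h2 : x ≤ 1/2) :
    Real.exp x ≤ 1 + 2*x := by
  have h1 : 1 - x ≤ Real.exp (-x) := by
    have := Real.add_one_le_exp (-x); linarith
  rw [Real.exp_neg] at h1
  have hE : 0 < Real.exp x := Real.exp_pos x
  have h4 : 0 < 1 - x := by linarith
  have h3 : (1 - x) * Real.exp x ≤ 1 := by
    rw [inv_eq_one_div, le_div_iff₀ hE] at h1
    linarith
  nlinarith

lemma a_incr {α : ℝ} (hα : 1 < α) {k : ℝ} (hk : Real.exp (4*α) ≤ k) :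
    (1/2) * Log (k+1) ^ (-α) + k / Log k ^ α ≤ (k+1) / Log (k+1) ^ α := by
  have hα0 : (0:ℝ) < α := by linarith
  have h14 : (1:ℝ) ≤ 4*α := by linarith
  have hek : Real.exp 1 ≤ k := le_trans (Real.exp_le_exp.mpr h14) hk
  have hkpos : (0:ℝ) < k := lt_of_lt_of_le (Real.exp_pos 1) hek
  have hek1 : Real.exp 1 ≤ k + 1 := by linarith
  rw [Log_of_ge hek, Log_of_ge hek1]
  set L0 := Real.log k with hL0def
  set L1 := Real.log (k+1) with hL1def
  have hL0 : 4*α ≤ L0 := by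
    rw [hL0def, Real.le_log_iff_exp_le hkpos]; exact hk
  have hL0pos : 0 < L0 := by linarith
  have hL01 : L0 ≤ L1 := Real.log_le_log hkpos (by linarith)
  have hL1pos : 0 < L1 := lt_of_lt_of_le hL0pos hL01
  have hdiff : L1 - L0 ≤ 1/k := by
    have h5 : L1 - L0 = Real.log ((k+1)/k) := by
      rw [Real.log_div (by linarith) (ne_of_gt hkpos)]
    have h6 : Real.log ((k+1)/k) ≤ (k+1)/k - 1 :=
      Real.log_le_sub_one_of_pos (by positivity)
    have h7 : (k+1)/k - 1 = 1/k := by field_simp; ring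
    linarith
  set r := L1 / L0 with hrdef
  have hr1 : 1 ≤ r := (one_le_div hL0pos).mpr hL01
  have hrpos : 0 < r := lt_of_lt_of_le one_pos hr1
  have hlogr : Real.log r ≤ (L1 - L0)/L0 := by
    have := Real.log_le_sub_one_of_pos hrpos
    have : r - 1 = (L1 - L0)/L0 := by rw [hrdef]; field_simp
    linarith [Real.log_le_sub_one_of_pos hrpos]
  have hlogr0 : 0 ≤ Real.log r := Real.log_nonneg hr1
  set x := α * Real.log r with hxdef
  have hx0 : 0 ≤ x := mul_nonneg (le_of_lt hα0) hlogr0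
  have hxk : x ≤ 1/(4*k) := by
    have h8 : (L1 - L0)/L0 ≤ (1/k)/(4*α) := by
      apply div_le_div₀ (by positivity) hdiff (by positivity) hL0
    have h9 : x ≤ α * ((1/k)/(4*α)) := by
      apply mul_le_mul_of_nonneg_left (le_trans hlogr h8) (le_of_lt hα0)
    have h10 : α * ((1/k)/(4*α)) = 1/(4*k) := by field_simp
    linarith
  have hk1 : (1:ℝ) ≤ k := by
    have h2e : (2:ℝ) ≤ Real.exp 1 := by have := Real.add_one_le_exp (1:ℝ); linarith
    linarith
  have hx2 : x ≤ 1/2 := by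
    have : 1/(4*k) ≤ 1/2 := by
      rw [div_le_div_iff₀ (by linarith) (by norm_num)]; linarith
    linarith
  have hra : r ^ α = Real.exp x := by
    rw [Real.rpow_def_of_pos hrpos, hxdef, mul_comm]
  have hkr : k * r ^ α ≤ k + 1/2 := by
    rw [hra]
    have := exp_le_one_add_two_mul hx0 hx2
    have hb : k * Real.exp x ≤ k * (1 + 2*x) :=
      mul_le_mul_of_nonneg_left this (le_of_lt hkpos)
    have hc : k * (2*x) ≤ k * (2 * (1/(4*k))) := by
      apply mul_le_mul_of_nonneg_left (by linarith) (le_of_lt hkpos)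
    have hd : k * (2 * (1/(4*k))) = 1/2 := by field_simp; ring
    nlinarith
  have hAB : L0 ^ α * r ^ α = L1 ^ α := by
    rw [← Real.mul_rpow (le_of_lt hL0pos) (le_of_lt hrpos)]
    congr 1
    rw [hrdef]
    field_simp
  have hA : (0:ℝ) < L0 ^ α := Real.rpow_pos_of_pos hL0pos α
  have hB : (0:ℝ) < L1 ^ α := Real.rpow_pos_of_pos hL1pos α
  have hr' : (0:ℝ) < r ^ α := Real.rpow_pos_of_pos hrpos α
  have hkA : k / L0 ^ α = k * r ^ α / L1 ^ α := by
    rw [← hAB]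
    rw [div_eq_div_iff (ne_of_gt hA) (by positivity)]
    ring
  rw [hkA, Real.rpow_neg (le_of_lt hL1pos)]
  rw [← div_eq_mul_inv, ← add_div]
  gcongr ?_ / _
  linarith
lemma min_integrable {Ω : Type*} [MeasurableSpace Ω] {μ : Measure Ω}
    {Y : Ω → ℝ} (hYm : Measurable Y) (hY0 : ∀ ω, 0 ≤ Y ω) (hY : Integrable Y μ)
    {c : ℝ} (hc : 0 ≤ c) : Integrable (fun ω => min (Y ω) c) μ := by
  apply hY.mono ((hYm.min measurable_const).aestronglyMeasurable)
  filter_upwards with ω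
  rw [Real.norm_eq_abs, Real.norm_eq_abs, abs_of_nonneg (le_min (hY0 ω) hc),
    abs_of_nonneg (hY0 ω)]
  exact min_le_left _ _

lemma min_integral_step {Ω : Type*} [MeasurableSpace Ω] (μ : Measure Ω) [IsProbabilityMeasure μ]
    {Y : Ω → ℝ} (hYm : Measurable Y) (hY0 : ∀ ω, 0 ≤ Y ω) (hY : Integrable Y μ)
    {b c : ℝ} (hb : 0 ≤ b) (hbc : b ≤ c) :
    (c - b) * (μ {ω | c < Y ω}).toReal ≤
      (∫ ω, min (Y ω) c ∂μ) - ∫ ω, min (Y ω) b ∂μ := by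
  have hc : 0 ≤ c := le_trans hb hbc
  have hs : MeasurableSet {ω | c < Y ω} := measurableSet_lt measurable_const hYm
  have hib := min_integrable hYm hY0 hY hb
  have hic := min_integrable hYm hY0 hY hc
  rw [← integral_sub hic hib]
  have hind : Integrable ({ω | c < Y ω}.indicator fun _ => c - b) μ :=
    (integrable_const (c - b)).indicator hs
  have hpt : ∀ ω, ({ω | c < Y ω}.indicator fun _ => c - b) ω ≤ min (Y ω) c - min (Y ω) b := by
    intro ω
    by_cases h : ω ∈ {ω | c < Y ω}
    · rw [Set.indicator_of_mem h]
      have h' : c < Y ω := h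
      rw [min_eq_right (le_of_lt (lt_of_le_of_lt hbc h')), min_eq_right (le_of_lt h')]
    · rw [Set.indicator_of_notMem h]
      have := min_le_min (le_refl (Y ω)) hbc
      linarith
  calc (c - b) * (μ {ω | c < Y ω}).toReal
      = ∫ ω, ({ω | c < Y ω}.indicator fun _ => c - b) ω ∂μ := by
        rw [integral_indicator_const _ hs]; simp [mul_comm, Measure.real]
    _ ≤ ∫ ω, (min (Y ω) c - min (Y ω) b) ∂μ :=
        integral_mono hind (hic.sub hib) hpt
lemma main_aux {Ω : Type*} [MeasurableSpace Ω] (μ : Measure Ω) [IsProbabilityMeasure μ]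
    (Y : Ω → ℝ) (hYm : Measurable Y) (hY0 : ∀ ω, 0 ≤ Y ω) (hY : Integrable Y μ)
    (α : ℝ) (hα : 1 < α) :
    Summable (fun k : ℕ => Log k ^ (-α) * (μ {ω | (k : ℝ) / Log k ^ α < Y ω}).toReal) := by
  have hα0 : (0:ℝ) < α := by linarith
  set N : ℕ := ⌈Real.exp (4*α)⌉₊ with hNdef
  set a : ℕ → ℝ := fun k => (k:ℝ) / Log k ^ α with hadef
  have hLpos : ∀ x : ℝ, 0 < Log x := fun x => lt_of_lt_of_le one_pos (one_le_Log x)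
  have ha0 : ∀ k : ℕ, 0 ≤ a k := fun k =>
    div_nonneg (Nat.cast_nonneg k) (Real.rpow_nonneg (hLpos _).le α)
  have hstep : ∀ k : ℕ, N ≤ k → (1/2) * Log ((k+1 : ℕ)) ^ (-α) + a k ≤ a (k+1) := by
    intro k hk
    have hek : Real.exp (4*α) ≤ (k:ℝ) := by
      calc Real.exp (4*α) ≤ (⌈Real.exp (4*α)⌉₊ : ℝ) := Nat.le_ceil _
        _ ≤ (k:ℝ) := by exact_mod_cast hk
    have h := a_incr hα hek
    simp only [hadef]
    push_cast
    exact h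
  have hmono : ∀ k : ℕ, N ≤ k → a k ≤ a (k+1) := by
    intro k hk
    have h := hstep k hk
    have h2 : 0 ≤ (1/2) * Log ((k+1 : ℕ)) ^ (-α) := by
      apply mul_nonneg (by norm_num) (Real.rpow_nonneg (hLpos _).le _)
    linarith
  set g : ℕ → ℝ := fun k => ∫ ω, min (Y ω) (a k) ∂μ with hgdef
  have hgle : ∀ k, g k ≤ ∫ ω, Y ω ∂μ := fun k =>
    integral_mono (min_integrable hYm hY0 hY (ha0 k)) hY (fun ω => min_le_left _ _)
  have hg0 : ∀ k, 0 ≤ g k := fun k => integral_nonneg (fun ω => le_min (hY0 ω) (ha0 k))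
  have hkey : ∀ k : ℕ, N ≤ k →
      Log ((k+1 : ℕ)) ^ (-α) * (μ {ω | a (k+1) < Y ω}).toReal ≤ 2 * (g (k+1) - g k) := by
    intro k hk
    have h1 := hstep k hk
    have h2 := min_integral_step μ hYm hY0 hY (ha0 k) (hmono k hk)
    set P := (μ {ω | a (k+1) < Y ω}).toReal with hPdef
    have hP : 0 ≤ P := ENNReal.toReal_nonneg
    have h3 : Log ((k+1 : ℕ)) ^ (-α) ≤ 2 * (a (k+1) - a k) := by linarith
    calc Log ((k+1 : ℕ)) ^ (-α) * P ≤ (2 * (a (k+1) - a k)) * P :=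
          mul_le_mul_of_nonneg_right h3 hP
      _ = 2 * ((a (k+1) - a k) * P) := by ring
      _ ≤ 2 * (g (k+1) - g k) := by linarith
  rw [← summable_nat_add_iff (N+1)]
  apply summable_of_sum_range_le (c := 2 * ∫ ω, Y ω ∂μ)
  · intro k
    exact mul_nonneg (Real.rpow_nonneg (hLpos _).le _) ENNReal.toReal_nonneg
  · intro n
    calc ∑ i ∈ Finset.range n,
          Log ((i + (N+1) : ℕ)) ^ (-α) * (μ {ω | ((i + (N+1) : ℕ) : ℝ) / Log ((i + (N+1) : ℕ)) ^ α < Y ω}).toReal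
        ≤ ∑ i ∈ Finset.range n, 2 * (g (i + 1 + N) - g (i + N)) := by
          apply Finset.sum_le_sum
          intro i _
          have := hkey (i + N) (Nat.le_add_left N i)
          convert this using 4
          · rfl
          · rw [show i + (N+1) = i + N + 1 by omega]
          · rw [show i + (N+1) = i + N + 1 by omega]
          · omega
      _ = 2 * ∑ i ∈ Finset.range n, (g (i + 1 + N) - g (i + N)) := by
          rw [Finset.mul_sum]
      _ = 2 * (g (n + N) - g (0 + N)) := by
          rw [Finset.sum_range_sub (fun i => g (i + N))]
      _ ≤ 2 * ∫ ω, Y ω ∂μ := by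
          have := hgle (n + N)
          have := hg0 (0 + N)
          linarith

theorem stmt_11 {Ω : Type*} [MeasurableSpace Ω] (μ : Measure Ω) [IsProbabilityMeasure μ]
    (X : Ω → ℝ) (hXm : Measurable X)
    (p : ℝ) (hp : 0 < p) (hXp : Integrable (fun ω => |X ω| ^ p) μ)
    (α : ℝ) (hα : 1 < α) :
    Summable (fun k : ℕ =>
      Log k ^ (-α) * (μ {ω | (k : ℝ) / Log k ^ α < |X ω| ^ p}).toReal) := by
  have hYm : Measurable (fun ω => |X ω| ^ p) := by fun_prop
  exact main_aux μ (fun ω => |X ω| ^ p) hYm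
    (fun ω => Real.rpow_nonneg (abs_nonneg _) p) hXp α hα
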